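/- The bias of the estimator M̂_k^B = C(n,k)·Σ_{i=1}^{n-k} (-1)^{i-1} Φ_{k+i}/C(n,k+i) satisfies |E[M̂_k^B] - E[M_k]| = C(n,k)·Σ_x p_x^{n+1} ≤ n^k · Σ_x p_x^{n+1}. -/

import Mathlib

open Finset MeasureTheory

lemma core {X : Type*} [Fintype X] [DecidableEq X] (p : X → ℝ) (x : X) :
    ∀ (n m : ℕ),
    ∑ ω : Fin n → X, (∏ j, p (ω j)) *
      (if (∑ j, if ω j = x then 1 else 0 : ℕ) = m then (1:ℝ) else 0)
    = (n.choose m : ℝ) * p x ^ m * (∑ y ∈ univ.erase x, p y) ^ (n - m) := by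
  intro n
  induction n with
  | zero =>
    intro m
    rcases m with _ | m
    · simp
    · simp
  | succ n ih =>
    intro m
    rw [← Fintype.sum_equiv (Fin.consEquiv fun _ : Fin (n+1) => X)
      (fun yg => (p yg.1 * ∏ j, p (yg.2 j)) *
        (if ((if yg.1 = x then 1 else 0) + ∑ j, if yg.2 j = x then 1 else 0 : ℕ) = m
          then (1:ℝ) else 0)) _
      (fun yg => by
        simp [Fin.consEquiv, Fin.prod_univ_succ, Fin.sum_univ_succ, -Finset.sum_boole])]
    rw [Fintype.sum_prod_type]
    rw [← Finset.add_sum_erase _ _ (Finset.mem_univ x)]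
    have h2 : ∀ y ∈ univ.erase x,
        (∑ g : Fin n → X, (p y * ∏ j, p (g j)) *
          (if ((if y = x then 1 else 0) + ∑ j, if g j = x then 1 else 0 : ℕ) = m
            then (1:ℝ) else 0))
        = p y * ((n.choose m : ℝ) * p x ^ m * (∑ y ∈ univ.erase x, p y) ^ (n - m)) := by
      intro y hy
      have hyx : y ≠ x := (Finset.mem_erase.mp hy).1
      simp only [if_neg hyx, zero_add, mul_assoc, ← Finset.mul_sum, ih m]

    rw [Finset.sum_congr rfl h2, ← Finset.sum_mul]
    set q : ℝ := ∑ y ∈ univ.erase x, p y with hq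
    simp only [eq_self_iff_true, if_true]
    rcases m with _ | m'
    · have hcond : ∀ N : ℕ, (1 + N = 0) ↔ False := fun N => iff_false_intro (by omega)
      simp only [hcond, if_false, mul_zero, Finset.sum_const_zero, zero_add]
      simp [pow_succ]
      ring
    · have hcond : ∀ N : ℕ, (1 + N = m' + 1) ↔ (N = m') := fun N => ⟨fun h => by omega, fun h => by omega⟩
      simp only [hcond]
      have h1 : (∑ g : Fin n → X, (p x * ∏ j, p (g j)) *
          (if (∑ j, if g j = x then 1 else 0 : ℕ) = m' then (1:ℝ) else 0))
          = p x * ((n.choose m' : ℝ) * p x ^ m' * q ^ (n - m')) := by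
        simp only [mul_assoc, ← Finset.mul_sum, ih m']
      rw [h1]
      rcases Nat.lt_or_ge n (m' + 1) with h | h
      · have hnm : n ≤ m' := Nat.lt_succ_iff.mp h
        rcases eq_or_lt_of_le hnm with h' | h'
        · subst h'
          simp [Nat.choose_self, Nat.choose_succ_self, Nat.sub_self, pow_succ]
          ring
        · simp [Nat.choose_eq_zero_of_lt h', Nat.choose_eq_zero_of_lt (Nat.succ_lt_succ h'), Nat.choose_eq_zero_of_lt (Nat.lt_succ_of_lt h')]
      · have e1 : n - m' = (n - (m' + 1)) + 1 := by omega
        have e2 : n + 1 - (m' + 1) = n - m' := by omega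
        rw [e2, Nat.choose_succ_succ, e1]
        push_cast
        ring

lemma alt_sum (p q : ℝ) (h : q = 1 - p) (m : ℕ) :
    ∑ i ∈ Finset.Icc 1 m, (-1:ℝ)^(i-1) * (p^i * q^(m-i))
      = p * q^m - (-1)^m * p^(m+1) := by
  induction m with
  | zero => subst h; simp
  | succ m ih =>
    rw [Finset.sum_Icc_succ_top (Nat.succ_le_succ (Nat.zero_le m))]
    have hc2 : ∀ i ∈ Finset.Icc 1 m, (-1:ℝ)^(i-1) * (p^i * q^(m+1-i))
        = ((-1:ℝ)^(i-1) * (p^i * q^(m-i))) * q := by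
      intro i hi
      have : m + 1 - i = (m - i) + 1 := by
        have := (Finset.mem_Icc.mp hi).2; omega
      rw [this, pow_succ]; ring
    rw [Finset.sum_congr rfl hc2, ← Finset.sum_mul, ih]
    simp only [Nat.add_sub_cancel, Nat.sub_self, pow_zero]
    subst h; ring

lemma int_eq {X : Type*} [Fintype X] [DecidableEq X] [MeasurableSpace X]
    [MeasurableSingletonClass X] (n : ℕ) (μX : Measure X) [IsProbabilityMeasure μX]
    (p : X → ℝ) (hp : ∀ x, (μX {x}).toReal = p x) (f : (Fin n → X) → ℝ) :
    ∫ ω, f ω ∂(Measure.pi fun _ : Fin n => μX)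
      = ∑ ω : Fin n → X, (∏ j, p (ω j)) * f ω := by
  rw [integral_fintype (Integrable.of_finite)]
  refine Finset.sum_congr rfl fun ω _ => ?_
  have h1 : ({ω} : Set (Fin n → X)) = Set.univ.pi fun j => {ω j} := by
    ext g; simp [funext_iff, Set.mem_pi]
  rw [Measure.real_def, h1, Measure.pi_pi, ENNReal.toReal_prod]
  simp [hp, smul_eq_mul]

/-- The bias of the estimator
`M̂_k^B = C(n,k) * ∑_{i=1}^{n-k} (-1)^(i-1) Φ_(k+i) / C(n,k+i)` satisfies
`|E[M̂_k^B] - E[M_k]| = C(n,k) * ∑ x, p x ^ (n+1) ≤ n^k * ∑ x, p x ^ (n+1)`. -/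
theorem minimal_bias_estimator_bias {X : Type*} [Fintype X] [DecidableEq X]
    [MeasurableSpace X] [MeasurableSingletonClass X]
    (n k : ℕ) (hk : k ≤ n)
    (μX : Measure X) [IsProbabilityMeasure μX]
    (p : X → ℝ) (hp : ∀ x, (μX {x}).toReal = p x) :
    |(∫ ω, ((n.choose k : ℝ) *
          ∑ i ∈ Finset.Icc 1 (n - k),
            (-1 : ℝ) ^ (i - 1) *
              ((∑ x, if (∑ j, if ω j = x then 1 else 0 : ℕ) = k + i then 1 else 0 : ℝ)
                / (n.choose (k + i) : ℝ)))
          ∂(Measure.pi fun _ : Fin n => μX))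
      - ∫ ω, (∑ x, if (∑ j, if ω j = x then 1 else 0 : ℕ) = k then p x else 0)
          ∂(Measure.pi fun _ : Fin n => μX)|
      = (n.choose k : ℝ) * ∑ x, p x ^ (n + 1) ∧
    (n.choose k : ℝ) * ∑ x, p x ^ (n + 1) ≤ (n : ℝ) ^ k * ∑ x, p x ^ (n + 1) := by
  have hpnn : ∀ x, 0 ≤ p x := fun x => (hp x) ▸ ENNReal.toReal_nonneg
  have hDnn : (0:ℝ) ≤ ∑ x, p x ^ (n + 1) :=
    Finset.sum_nonneg fun x _ => pow_nonneg (hpnn x) _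
  have hsum1 : ∑ x : X, p x = 1 := by
    have h : ∑ x : X, μX {x} = μX Set.univ := by
      rw [← measure_biUnion_finset]
      · congr 1; ext y; simp
      · intro a _ b _ hab; simp [Function.onFun, Set.disjoint_singleton, hab]
      · intro _ _; exact measurableSet_singleton _
    have : ∑ x : X, (μX {x}).toReal = 1 := by
      rw [← ENNReal.toReal_sum (by intro a _; exact measure_ne_top _ _), h,
        measure_univ, ENNReal.toReal_one]
    simpa [hp] using this
  have hq : ∀ x : X, ∑ y ∈ univ.erase x, p y = 1 - p x := by
    intro x
    rw [Finset.sum_erase_eq_sub (Finset.mem_univ x), hsum1]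
  -- expectation of Φ_m
  have hΦ : ∀ m : ℕ,
      (∫ ω, (∑ x, if (∑ j, if ω j = x then 1 else 0 : ℕ) = m then (1:ℝ) else 0)
        ∂(Measure.pi fun _ : Fin n => μX))
      = ∑ x, (n.choose m : ℝ) * p x ^ m * (1 - p x) ^ (n - m) := by
    intro m
    rw [int_eq n μX p hp]
    simp_rw [Finset.mul_sum]
    rw [Finset.sum_comm]
    refine Finset.sum_congr rfl fun x _ => ?_
    rw [← hq x]
    exact core p x n m
  -- expectation of M_k
  have hM :
      (∫ ω, (∑ x, if (∑ j, if ω j = x then 1 else 0 : ℕ) = k then p x else 0)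
        ∂(Measure.pi fun _ : Fin n => μX))
      = ∑ x, p x * ((n.choose k : ℝ) * p x ^ k * (1 - p x) ^ (n - k)) := by
    rw [int_eq n μX p hp]
    simp_rw [Finset.mul_sum]
    rw [Finset.sum_comm]
    refine Finset.sum_congr rfl fun x _ => ?_
    have h1 : ∀ ω : Fin n → X,
        (∏ j, p (ω j)) * (if (∑ j, if ω j = x then 1 else 0 : ℕ) = k then p x else 0)
        = p x * ((∏ j, p (ω j)) *
            (if (∑ j, if ω j = x then 1 else 0 : ℕ) = k then (1:ℝ) else 0)) := by
      intro ω; split <;> ring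
    rw [Finset.sum_congr rfl fun ω _ => h1 ω, ← Finset.mul_sum, core p x n k, hq x]
  -- expectation of the estimator
  have hI1 :
      (∫ ω, ((n.choose k : ℝ) *
          ∑ i ∈ Finset.Icc 1 (n - k),
            (-1 : ℝ) ^ (i - 1) *
              ((∑ x, if (∑ j, if ω j = x then 1 else 0 : ℕ) = k + i then 1 else 0 : ℝ)
                / (n.choose (k + i) : ℝ)))
          ∂(Measure.pi fun _ : Fin n => μX))
      = (n.choose k : ℝ) * ∑ i ∈ Finset.Icc 1 (n - k),
          (-1 : ℝ) ^ (i - 1) *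
            ∑ x, p x ^ (k + i) * (1 - p x) ^ (n - (k + i)) := by
    rw [integral_const_mul]
    congr 1
    rw [integral_finset_sum _ (fun i _ => Integrable.of_finite)]
    refine Finset.sum_congr rfl fun i hi => ?_
    have hki : k + i ≤ n := by
      have := (Finset.mem_Icc.mp hi).2; omega
    have hc : (0:ℝ) < (n.choose (k + i) : ℝ) := by
      exact_mod_cast Nat.choose_pos hki
    rw [integral_const_mul, integral_div, hΦ (k + i)]
    congr 1
    rw [show (∑ x, (n.choose (k+i) : ℝ) * p x ^ (k+i) * (1 - p x) ^ (n - (k+i)))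
        = (n.choose (k+i) : ℝ) * ∑ x, p x ^ (k+i) * (1 - p x) ^ (n - (k+i)) from by
          rw [Finset.mul_sum]; exact Finset.sum_congr rfl fun x _ => by ring]
    rw [mul_div_assoc, mul_comm, div_mul_cancel₀ _ hc.ne']
  rw [hI1, hM]
  constructor
  · -- the key algebraic identity
    have hkey : (n.choose k : ℝ) * (∑ i ∈ Finset.Icc 1 (n - k),
          (-1 : ℝ) ^ (i - 1) * ∑ x, p x ^ (k + i) * (1 - p x) ^ (n - (k + i)))
        - ∑ x, p x * ((n.choose k : ℝ) * p x ^ k * (1 - p x) ^ (n - k))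
        = (-1:ℝ) ^ (n - k) * -((n.choose k : ℝ) * ∑ x, p x ^ (n + 1)) := by
      have hswap : (∑ i ∈ Finset.Icc 1 (n - k),
            (-1 : ℝ) ^ (i - 1) * ∑ x, p x ^ (k + i) * (1 - p x) ^ (n - (k + i)))
          = ∑ x, ∑ i ∈ Finset.Icc 1 (n - k),
            (-1 : ℝ) ^ (i - 1) * (p x ^ (k + i) * (1 - p x) ^ (n - (k + i))) := by
        simp_rw [Finset.mul_sum]
        rw [Finset.sum_comm]
      rw [hswap]
      have hx : ∀ x : X, ∑ i ∈ Finset.Icc 1 (n - k),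
            (-1 : ℝ) ^ (i - 1) * (p x ^ (k + i) * (1 - p x) ^ (n - (k + i)))
          = p x ^ k * (p x * (1 - p x) ^ (n - k) - (-1:ℝ) ^ (n - k) * p x ^ ((n - k) + 1)) := by
        intro x
        have h2 : ∀ i ∈ Finset.Icc 1 (n - k),
            (-1 : ℝ) ^ (i - 1) * (p x ^ (k + i) * (1 - p x) ^ (n - (k + i)))
            = p x ^ k * ((-1:ℝ) ^ (i - 1) * (p x ^ i * (1 - p x) ^ ((n - k) - i))) := by
          intro i hi
          rw [pow_add, show n - (k + i) = (n - k) - i by omega]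
          ring
        rw [Finset.sum_congr rfl h2, ← Finset.mul_sum, alt_sum (p x) (1 - p x) rfl (n - k)]
      rw [Finset.sum_congr rfl fun x _ => hx x]
      have hpow : ∀ x : X, p x ^ k * p x ^ ((n - k) + 1) = p x ^ (n + 1) := by
        intro x; rw [← pow_add]; congr 1; omega
      have hterm : ∀ x : X,
          (n.choose k : ℝ) * (p x ^ k * (p x * (1 - p x) ^ (n - k)
              - (-1:ℝ) ^ (n - k) * p x ^ ((n - k) + 1)))
            - p x * ((n.choose k : ℝ) * p x ^ k * (1 - p x) ^ (n - k))
          = (-1:ℝ) ^ (n - k) * -((n.choose k : ℝ) * p x ^ (n + 1)) := by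
        intro x; rw [← hpow x]; ring
      rw [Finset.mul_sum, ← Finset.sum_sub_distrib,
        Finset.sum_congr rfl fun x _ => hterm x, ← Finset.mul_sum]
      congr 1
      rw [Finset.sum_neg_distrib, ← Finset.mul_sum]
    rw [hkey, abs_mul, abs_neg, abs_pow, abs_neg, abs_one, one_pow, one_mul,
      abs_of_nonneg (by positivity)]
  · refine mul_le_mul_of_nonneg_right ?_ hDnn
    exact_mod_cast (Nat.choose_le_descFactorial n k).trans (Nat.descFactorial_le_pow n k)
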